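/- For all positive integers n ≥ k, F_{n,k} = (k/n) · ∑_{m=k-1}^{n-1} F_{m,k-1}. -/

import Mathlib

/-- `F n k = ∑ 1/(i₁⋯i_k)` over ordered `k`-tuples of positive integers with sum `n`. -/
def F (n k : ℕ) : ℚ :=
  ∑ f ∈ (Finset.Nat.antidiagonalTuple k n).filter (fun f => ∀ j, f j ≠ 0),
    ∏ j, (1 : ℚ) / (f j : ℚ)

open Finset in
lemma F_key (n K : ℕ) (hn : 0 < n) (j : Fin (K + 1)) :
    ∑ f ∈ (Finset.Nat.antidiagonalTuple (K + 1) n).filter (fun f => ∀ j, f j ≠ 0),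
      ((f j : ℚ) * ∏ i, (1 : ℚ) / (f i : ℚ))
      = ∑ m ∈ Finset.Icc K (n - 1), F m K := by
  have : ∑ m ∈ Finset.Icc K (n - 1), F m K
      = ∑ p ∈ (Finset.Icc K (n - 1)).sigma
          (fun m => (Finset.Nat.antidiagonalTuple K m).filter (fun f => ∀ j, f j ≠ 0)),
          ∏ i, (1 : ℚ) / (p.2 i : ℚ) := by
    rw [Finset.sum_sigma]; rfl
  rw [this]
  refine Finset.sum_nbij' (fun f => ⟨n - f j, Fin.removeNth j f⟩)
    (fun p => Fin.insertNth j (n - p.1) p.2) ?_ ?_ ?_ ?_ ?_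
  · intro f hf
    simp only [Finset.mem_filter, Finset.Nat.mem_antidiagonalTuple] at hf
    obtain ⟨hsum, hpos⟩ := hf
    have hsplit : f j + ∑ i : Fin K, f (j.succAbove i) = n := by
      rw [← Fin.sum_univ_succAbove f j]; exact hsum
    have hrem : ∑ i : Fin K, Fin.removeNth j f i = n - f j := by
      simp only [Fin.removeNth]; omega
    have hK : K ≤ ∑ i : Fin K, f (j.succAbove i) := by
      calc K = ∑ _i : Fin K, 1 := by simp
        _ ≤ _ := Finset.sum_le_sum (fun i _ => Nat.one_le_iff_ne_zero.2 (hpos _))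
    have hfj : 1 ≤ f j := Nat.one_le_iff_ne_zero.2 (hpos j)
    simp only [Finset.mem_sigma, Finset.mem_Icc, Finset.mem_filter,
      Finset.Nat.mem_antidiagonalTuple]
    refine ⟨⟨by omega, by omega⟩, hrem, fun i => hpos _⟩
  · intro p hp
    simp only [Finset.mem_sigma, Finset.mem_Icc, Finset.mem_filter,
      Finset.Nat.mem_antidiagonalTuple] at hp
    obtain ⟨⟨hK, hle⟩, hsum, hpos⟩ := hp
    simp only [Finset.mem_filter, Finset.Nat.mem_antidiagonalTuple]
    constructor
    · rw [Fin.sum_univ_succAbove _ j]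
      simp only [Fin.insertNth_apply_same, Fin.insertNth_apply_succAbove, hsum]
      omega
    · intro i
      by_cases hij : i = j
      · subst hij; rw [Fin.insertNth_apply_same]; omega
      · obtain ⟨i', rfl⟩ := Fin.exists_succAbove_eq hij
        rw [Fin.insertNth_apply_succAbove]; exact hpos _
  · intro f hf
    simp only [Finset.mem_filter, Finset.Nat.mem_antidiagonalTuple] at hf
    obtain ⟨hsum, hpos⟩ := hf
    have hsplit : f j + ∑ i : Fin K, f (j.succAbove i) = n := by
      rw [← Fin.sum_univ_succAbove f j]; exact hsum
    have hfj : 1 ≤ f j := Nat.one_le_iff_ne_zero.2 (hpos j)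
    have : n - (n - f j) = f j := by omega
    have hrem : n - ∑ i : Fin K, Fin.removeNth j f i = f j := by
      simp only [Fin.removeNth]; omega
    calc Fin.insertNth j (n - (n - f j)) (Fin.removeNth j f)
        = Fin.insertNth j (f j) (Fin.removeNth j f) := by rw [this]
      _ = f := Fin.insertNth_self_removeNth j f
  · intro p hp
    obtain ⟨m, g⟩ := p
    simp only [Finset.mem_sigma, Finset.mem_Icc, Finset.mem_filter,
      Finset.Nat.mem_antidiagonalTuple] at hp
    obtain ⟨⟨hK, hle⟩, hsum, hpos⟩ := hp
    have h2 : n - (n - m) = m := by omega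
    simp [Fin.insertNth_apply_same, Fin.removeNth_insertNth, h2]
  · intro f hf
    simp only [Finset.mem_filter, Finset.Nat.mem_antidiagonalTuple] at hf
    obtain ⟨hsum, hpos⟩ := hf
    have hfj : (f j : ℚ) ≠ 0 := Nat.cast_ne_zero.2 (hpos j)
    rw [Fin.prod_univ_succAbove (fun i => (1 : ℚ) / (f i : ℚ)) j]
    simp only [Fin.removeNth]
    field_simp

theorem F_sum_recurrence (n k : ℕ) (hk : 0 < k) (hkn : k ≤ n) :
    F n k = ((k : ℚ) / (n : ℚ)) * ∑ m ∈ Finset.Icc (k - 1) (n - 1), F m (k - 1) := by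
  obtain ⟨K, rfl⟩ : ∃ K, k = K + 1 := ⟨k - 1, by omega⟩
  have hn : 0 < n := lt_of_lt_of_le hk hkn
  have hn' : (n : ℚ) ≠ 0 := Nat.cast_ne_zero.2 hn.ne'
  have hmul : (n : ℚ) * F n (K + 1)
      = (K + 1 : ℕ) * ∑ m ∈ Finset.Icc K (n - 1), F m K := by
    rw [F, Finset.mul_sum]
    have step : ∀ f ∈ (Finset.Nat.antidiagonalTuple (K + 1) n).filter (fun f => ∀ j, f j ≠ 0),
        (n : ℚ) * ∏ i, (1 : ℚ) / (f i : ℚ)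
        = ∑ j : Fin (K + 1), ((f j : ℚ) * ∏ i, (1 : ℚ) / (f i : ℚ)) := by
      intro f hf
      simp only [Finset.mem_filter, Finset.Nat.mem_antidiagonalTuple] at hf
      rw [← Finset.sum_mul]
      congr 1
      have := hf.1
      push_cast [← this]
      ring
    rw [Finset.sum_congr rfl step, Finset.sum_comm]
    rw [Finset.sum_congr rfl (fun j _ => F_key n K hn j)]
    simp [Finset.sum_const, mul_comm]
  have hsimp : K + 1 - 1 = K := rfl
  rw [hsimp]
  field_simp
  rw [mul_comm (F n (K + 1)) (n : ℚ), hmul]
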